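/- Let E be a strongly connected finite directed graph with vertex matrix A. Then there is a constant K > 0 such that for all N ∈ ℕ and all vertices w: K · (∑_{v} A^N(v,w)) ≤ ρ(A)^N ≤ max_{u} ∑_{v} A^N(v,u), where ρ(A) is the spectral radius of A. -/

import Mathlib

/-- The vertex matrix of a finite graph: `A v w` is the number of edges from `v` to `w`. -/
noncomputable def vertexMatrix {V E1 : Type*} [Fintype V] [Fintype E1]
    (r s : E1 → V) : Matrix V V ℕ :=
  fun v w => Nat.card {e : E1 // r e = v ∧ s e = w}

/-- The spectral radius of a real matrix. -/
noncomputable def specRad {V : Type*} [Fintype V] [DecidableEq V] (A : Matrix V V ℝ) : ℝ :=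
  (spectralRadius ℂ (A.map Complex.ofReal)).toReal

open scoped ENNReal NNReal Matrix

namespace Stmt11Aux

variable {V : Type*} [Fintype V] [DecidableEq V]

noncomputable instance : NormedRing (Matrix V V ℂ) := Matrix.linftyOpNormedRing
noncomputable instance : NormedAlgebra ℂ (Matrix V V ℂ) := Matrix.linftyOpNormedAlgebra
instance : CompleteSpace (Matrix V V ℂ) :=
  FiniteDimensional.complete ℂ _

theorem nnnorm_entry_le (M : Matrix V V ℂ) (i j : V) : ‖M i j‖₊ ≤ ‖M‖₊ := by
  rw [Matrix.linfty_opNNNorm_def]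
  exact le_trans (Finset.single_le_sum (f := fun j => ‖M i j‖₊) (by simp) (Finset.mem_univ j))
    (Finset.le_sup (f := fun i => ∑ j, ‖M i j‖₊) (Finset.mem_univ i))

theorem spectralRadius_transpose (M : Matrix V V ℂ) :
    spectralRadius ℂ Mᵀ = spectralRadius ℂ M := by
  have hσ : spectrum ℂ Mᵀ = spectrum ℂ M := by
    ext μ
    simp only [spectrum.mem_iff, not_iff_not]
    rw [Matrix.isUnit_iff_isUnit_det, Matrix.isUnit_iff_isUnit_det,
      ← Matrix.det_transpose (algebraMap ℂ (Matrix V V ℂ) μ - M)]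
    congr 2
    simp [Matrix.transpose_sub, Matrix.algebraMap_eq_diagonal]
  unfold spectralRadius
  rw [hσ]

theorem map_nat_pow (A : Matrix V V ℕ) (N : ℕ) :
    (A.map ((↑) : ℕ → ℂ)) ^ N = (A ^ N).map ((↑) : ℕ → ℂ) := by
  have := map_pow (Nat.castRingHom ℂ).mapMatrix A N
  simpa [RingHom.mapMatrix_apply] using this.symm

theorem entry_mul_le (X Y : Matrix V V ℕ) (v w u : V) :
    X v w * Y w u ≤ (X * Y) v u := by
  rw [Matrix.mul_apply]
  exact Finset.single_le_sum (f := fun k => X v k * Y k u) (by simp) (Finset.mem_univ w)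

theorem diag_pow_le (A : Matrix V V ℕ) (m : ℕ) (u : V) :
    ∀ i : ℕ, ((A ^ m) u u) ^ i ≤ (A ^ (m * i)) u u := by
  intro i
  induction i with
  | zero => simp [Matrix.one_apply]
  | succ i ih =>
    have h1 : (A ^ (m * i)) u u * (A ^ m) u u ≤ (A ^ (m * i) * A ^ m) u u :=
      entry_mul_le _ _ u u u
    rw [← pow_add] at h1
    calc ((A ^ m) u u) ^ (i + 1) = ((A ^ m) u u) ^ i * (A ^ m) u u := by ring
    _ ≤ (A ^ (m * i)) u u * (A ^ m) u u := Nat.mul_le_mul_right _ ih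
    _ ≤ (A ^ (m * i + m)) u u := h1
    _ = (A ^ (m * (i + 1))) u u := by ring_nf

/-- Diagonal entries are dominated by powers of the spectral radius. -/
theorem diag_le_spectralRadius_pow (A : Matrix V V ℕ) (m : ℕ) (u : V) :
    (((A ^ m) u u : ℕ) : ℝ≥0∞) ≤ spectralRadius ℂ (A.map ((↑) : ℕ → ℂ)) ^ m := by
  rcases Nat.eq_zero_or_pos m with hm | hm
  · subst hm; simp [Matrix.one_apply]
  set B := A.map ((↑) : ℕ → ℂ)
  set r := spectralRadius ℂ B with hr
  set c : ℝ≥0∞ := (((A ^ m) u u : ℕ) : ℝ≥0∞) with hc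
  have key : c ^ (1 / (m : ℝ)) ≤ r := by
    have htend := spectrum.pow_nnnorm_pow_one_div_tendsto_nhds_spectralRadius B
    have hmono : Filter.Tendsto (fun i : ℕ => m * i) Filter.atTop Filter.atTop :=
      Filter.tendsto_atTop_mono (fun i => Nat.le_mul_of_pos_left i hm) Filter.tendsto_id
    refine ge_of_tendsto (htend.comp hmono) ?_
    filter_upwards [Filter.eventually_ge_atTop 1] with i hi
    have hentry : (((A ^ (m * i)) u u : ℕ) : ℝ≥0) ≤ ‖B ^ (m * i)‖₊ := by
      rw [show B ^ (m * i) = (A ^ (m * i)).map ((↑) : ℕ → ℂ) from map_nat_pow A (m * i)]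
      have := nnnorm_entry_le ((A ^ (m * i)).map ((↑) : ℕ → ℂ)) u u
      rwa [Matrix.map_apply, RCLike.nnnorm_natCast] at this
    have hpow : c ^ (i : ℕ) ≤ (‖B ^ (m * i)‖₊ : ℝ≥0∞) := by
      calc c ^ (i : ℕ) = ((((A ^ m) u u) ^ i : ℕ) : ℝ≥0∞) := by
            rw [hc]; push_cast; ring
      _ ≤ (((A ^ (m * i)) u u : ℕ) : ℝ≥0∞) := by
            exact_mod_cast Nat.cast_le.mpr (diag_pow_le A m u i)
      _ ≤ (‖B ^ (m * i)‖₊ : ℝ≥0∞) := by exact_mod_cast hentry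
    have h1 : c ^ (1 / (m : ℝ)) =
        (c ^ (i : ℕ)) ^ (1 / ((m * i : ℕ) : ℝ)) := by
      rw [← ENNReal.rpow_natCast c i, ← ENNReal.rpow_mul]
      congr 1
      have hm' : (m : ℝ) ≠ 0 := Nat.cast_ne_zero.mpr hm.ne'
      have hi' : (i : ℝ) ≠ 0 := Nat.cast_ne_zero.mpr (by omega)
      field_simp
      exact Nat.cast_mul m i
    rw [h1]
    exact ENNReal.rpow_le_rpow hpow (by positivity)
  have := ENNReal.rpow_le_rpow key (le_of_lt (by exact_mod_cast hm : (0:ℝ) < m))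
  rwa [← ENNReal.rpow_mul, one_div, inv_mul_cancel₀
      (Nat.cast_ne_zero.mpr hm.ne' : (m:ℝ) ≠ 0), ENNReal.rpow_one,
      ENNReal.rpow_natCast] at this

theorem spectralRadius_pow_le_nnnorm [Nonempty V] (a : Matrix V V ℂ) (N : ℕ) (hN : 0 < N) :
    spectralRadius ℂ a ^ N ≤ (‖a ^ N‖₊ : ℝ≥0∞) := by
  obtain ⟨n, rfl⟩ : ∃ n, N = n + 1 := ⟨N - 1, by omega⟩
  have h := spectrum.spectralRadius_le_pow_nnnorm_pow_one_div ℂ a n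
  rw [nnnorm_one, ENNReal.coe_one, ENNReal.one_rpow, mul_one] at h
  have h2 := ENNReal.rpow_le_rpow h (le_of_lt (by positivity : (0:ℝ) < ((n:ℝ) + 1)))
  rw [← ENNReal.rpow_mul, one_div, inv_mul_cancel₀ (by positivity : ((n:ℝ) + 1) ≠ 0),
    ENNReal.rpow_one] at h2
  calc spectralRadius ℂ a ^ (n + 1) = spectralRadius ℂ a ^ (((n + 1 : ℕ)) : ℝ) := by
        rw [ENNReal.rpow_natCast]
  _ ≤ (‖a ^ (n + 1)‖₊ : ℝ≥0∞) := by
        convert h2 using 2; push_cast; ring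
  
end Stmt11Aux

/-- For a strongly connected finite directed graph with vertex matrix `A`,
there is `K > 0` with `K ∑_v A^N(v,w) ≤ ρ(A)^N ≤ max_u ∑_v A^N(v,u)`
for all `N` and all vertices `w`. -/
theorem stmt11 {V E1 : Type*} [Fintype V] [Fintype E1] [DecidableEq V] [Nonempty V]
    (r s : E1 → V)
    (hconn : ∀ v w : V, ∃ N : ℕ, 0 < (vertexMatrix r s ^ N) v w) :
    ∃ K > (0 : ℝ), ∀ N : ℕ, ∀ w : V,
      K * (∑ v : V, ((vertexMatrix r s ^ N) v w : ℝ)) ≤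
          specRad ((vertexMatrix r s).map (Nat.cast : ℕ → ℝ)) ^ N ∧
        specRad ((vertexMatrix r s).map (Nat.cast : ℕ → ℝ)) ^ N ≤
          ⨆ u : V, ∑ v : V, ((vertexMatrix r s ^ N) v u : ℝ) := by
  classical
  set A := vertexMatrix r s with hA
  set ρ := specRad (A.map (Nat.cast : ℕ → ℝ)) with hρdef
  have hBeq : (A.map (Nat.cast : ℕ → ℝ)).map Complex.ofReal = A.map ((↑) : ℕ → ℂ) := by
    ext v w; simp [Matrix.map_apply]
  set rr := spectralRadius ℂ (A.map ((↑) : ℕ → ℂ)) with hrr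
  have hρ : ρ = rr.toReal := by rw [hρdef, specRad, hBeq]
  have hfin : rr ≠ ∞ :=
    (lt_of_le_of_lt (spectrum.spectralRadius_le_nnnorm (𝕜 := ℂ) (A.map ((↑) : ℕ → ℂ))) ENNReal.coe_lt_top).ne
  have hρ0 : (0:ℝ) ≤ ρ := by rw [hρ]; exact ENNReal.toReal_nonneg
  -- diagonal entries bounded by ρ^m
  have hdiag : ∀ (m : ℕ) (u : V), (((A ^ m) u u : ℕ) : ℝ) ≤ ρ ^ m := by
    intro m u
    have h1 := Stmt11Aux.diag_le_spectralRadius_pow A m u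
    have h2 := ENNReal.toReal_mono (ENNReal.pow_ne_top hfin) h1
    simpa [ENNReal.toReal_pow, hρ] using h2
  -- choose connecting path lengths
  choose kk hkk using hconn
  set D := Finset.univ.sup (fun p : V × V => kk p.1 p.2) with hD
  set Mx := max ρ 1 with hMx
  have hMx1 : (1:ℝ) ≤ Mx := le_max_right _ _
  have hMx0 : (0:ℝ) ≤ Mx := le_trans zero_le_one hMx1
  -- entrywise bound
  have hentry : ∀ (N : ℕ) (v w : V), (((A ^ N) v w : ℕ) : ℝ) ≤ ρ ^ N * Mx ^ D := by
    intro N v w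
    set k := kk w v with hk
    have h1 : (A ^ N) v w ≤ (A ^ (N + k)) v v := by
      calc (A ^ N) v w = (A ^ N) v w * 1 := (mul_one _).symm
      _ ≤ (A ^ N) v w * (A ^ k) w v := Nat.mul_le_mul_left _ (hkk w v)
      _ ≤ (A ^ N * A ^ k) v v := Stmt11Aux.entry_mul_le _ _ v w v
      _ = (A ^ (N + k)) v v := by rw [← pow_add]
    calc (((A ^ N) v w : ℕ) : ℝ) ≤ (((A ^ (N + k)) v v : ℕ) : ℝ) := by exact_mod_cast h1
    _ ≤ ρ ^ (N + k) := hdiag _ _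
    _ = ρ ^ N * ρ ^ k := pow_add ρ N k
    _ ≤ ρ ^ N * Mx ^ D := by
        refine mul_le_mul_of_nonneg_left ?_ (pow_nonneg hρ0 N)
        calc ρ ^ k ≤ Mx ^ k := pow_le_pow_left₀ hρ0 (le_max_left _ _) k
        _ ≤ Mx ^ D := pow_le_pow_right₀ hMx1 (Finset.le_sup (f := fun p : V × V => kk p.1 p.2)
              (Finset.mem_univ (w, v)))
  set n : ℝ := (Fintype.card V : ℝ) with hn
  have hn1 : (1:ℝ) ≤ n := by
    rw [hn]; exact_mod_cast Fintype.card_pos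
  have hdenom : (0:ℝ) < n * Mx ^ D := by positivity
  refine ⟨(n * Mx ^ D)⁻¹, inv_pos.mpr hdenom, fun N w => ?_⟩
  constructor
  · -- lower bound
    have hsum : (∑ v : V, (((A ^ N) v w : ℕ) : ℝ)) ≤ n * (ρ ^ N * Mx ^ D) := by
      calc (∑ v : V, (((A ^ N) v w : ℕ) : ℝ)) ≤ ∑ _v : V, ρ ^ N * Mx ^ D :=
            Finset.sum_le_sum fun v _ => hentry N v w
      _ = n * (ρ ^ N * Mx ^ D) := by rw [Finset.sum_const, hn]; simp [mul_comm]
    calc (n * Mx ^ D)⁻¹ * ∑ v : V, (((A ^ N) v w : ℕ) : ℝ)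
        ≤ (n * Mx ^ D)⁻¹ * (n * (ρ ^ N * Mx ^ D)) :=
          mul_le_mul_of_nonneg_left hsum (inv_nonneg.mpr hdenom.le)
    _ = ρ ^ N := by field_simp
  · -- upper bound
    rcases Nat.eq_zero_or_pos N with hN | hN
    · subst hN
      have hval : ∀ u : V, (∑ v : V, (((A ^ 0) v u : ℕ) : ℝ)) = 1 := by
        intro u
        simp [Matrix.one_apply]
      calc ρ ^ 0 = 1 := pow_zero ρ
      _ = ∑ v : V, (((A ^ 0) v (Classical.arbitrary V) : ℕ) : ℝ) := (hval _).symm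
      _ ≤ ⨆ u : V, ∑ v : V, (((A ^ 0) v u : ℕ) : ℝ) :=
          le_ciSup (f := fun u : V => ∑ v : V, (((A ^ 0) v u : ℕ) : ℝ))
            (Finite.bddAbove_range _) _
    · have htr : spectralRadius ℂ ((A.map ((↑) : ℕ → ℂ))ᵀ) = rr :=
        Stmt11Aux.spectralRadius_transpose _
      have hup : rr ^ N ≤ (‖((A.map ((↑) : ℕ → ℂ))ᵀ) ^ N‖₊ : ℝ≥0∞) := by
        rw [← htr]
        exact Stmt11Aux.spectralRadius_pow_le_nnnorm _ N hN
      have hnormeq : ‖((A.map ((↑) : ℕ → ℂ))ᵀ) ^ N‖₊ =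
          Finset.univ.sup (fun u : V => ∑ v : V, (((A ^ N) v u : ℕ) : ℝ≥0)) := by
        rw [← Matrix.transpose_pow, Stmt11Aux.map_nat_pow, Matrix.linfty_opNNNorm_def]
        congr 1
        ext u
        congr 1
        ext v
        simp [Matrix.transpose_apply, Matrix.map_apply]
      obtain ⟨u0, -, hu0⟩ := Finset.exists_mem_eq_sup (Finset.univ : Finset V)
        Finset.univ_nonempty (fun u : V => ∑ v : V, (((A ^ N) v u : ℕ) : ℝ≥0))
      have hreal : ρ ^ N ≤ ∑ v : V, (((A ^ N) v u0 : ℕ) : ℝ) := by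
        have h2 := ENNReal.toReal_mono (by simp) hup
        rw [ENNReal.toReal_pow, ← hρ] at h2
        rw [ENNReal.coe_toReal, hnormeq, hu0] at h2
        simpa [NNReal.coe_sum] using h2
      exact hreal.trans (le_ciSup (f := fun u : V => ∑ v : V, (((A ^ N) v u : ℕ) : ℝ))
        (Finite.bddAbove_range _) u0)
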